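/- Fix α > 1 and let N₀ = 3·⌈α + 1⌉. For an integer n ≥ N₀ define n''' = ⌊n/(α + 1)⌋ + 1, n* = n − n''', n'' = ⌊n*/(α + 1)⌋ + 1, and n' = n* − n''. Then: (a) n = n' + n'' + n''' and n* = n' + n''; (b) α·(n''' − 3) ≤ n* < α·n'''; (c) α·(n'' − 3) ≤ n' < α·n''; (d) n''' ≥ 3; (e) n' ≥ 1 and n'' ≥ 1. -/
import Mathlib


/-- `n''' = ⌊n/(α+1)⌋ + 1`, the least integer greater than `n/(α+1)`. -/
noncomputable def nPPP (α : ℝ) (n : ℕ) : ℕ := ⌊(n : ℝ) / (α + 1)⌋₊ + 1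

/-- `n* = n − n'''`. -/
noncomputable def nStar (α : ℝ) (n : ℕ) : ℕ := n - nPPP α n

/-- `n'' = ⌊n*/(α+1)⌋ + 1`. -/
noncomputable def nPP (α : ℝ) (n : ℕ) : ℕ := ⌊(nStar α n : ℝ) / (α + 1)⌋₊ + 1

/-- `n' = n* − n''`. -/
noncomputable def nP (α : ℝ) (n : ℕ) : ℕ := nStar α n - nPP α n

lemma floor_step (α : ℝ) (hα : 1 < α) (m k : ℕ) (hm : 3 ≤ (m : ℝ))
    (hk : k = ⌊(m : ℝ) / (α + 1)⌋₊ + 1) :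
    k < m ∧
    α * ((k : ℝ) - 3) ≤ ((m - k : ℕ) : ℝ) ∧
    ((m - k : ℕ) : ℝ) < α * (k : ℝ) ∧
    (m : ℝ) * α / (α + 1) - 1 ≤ ((m - k : ℕ) : ℝ) := by
  have hβ : (0 : ℝ) < α + 1 := by linarith
  set q : ℝ := (⌊(m : ℝ) / (α + 1)⌋₊ : ℝ) with hq
  have hq0 : 0 ≤ q := Nat.cast_nonneg _
  have hfl : q ≤ (m : ℝ) / (α + 1) := Nat.floor_le (by positivity)
  have hfu : (m : ℝ) / (α + 1) < q + 1 := Nat.lt_floor_add_one _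
  have hfl' : q * (α + 1) ≤ (m : ℝ) := (le_div_iff₀ hβ).mp hfl
  have hfu' : (m : ℝ) < (q + 1) * (α + 1) := (div_lt_iff₀ hβ).mp hfu
  have hkr : (k : ℝ) = q + 1 := by rw [hk]; push_cast [hq]; ring
  have hkm : (k : ℝ) < (m : ℝ) := by
    rw [hkr]
    have h2 : (m : ℝ) / (α + 1) ≤ (m : ℝ) / 2 :=
      div_le_div_of_nonneg_left (by positivity) (by norm_num) (by linarith)
    nlinarith [hfl]
  have hkmn : k < m := by exact_mod_cast hkm
  have hcast : ((m - k : ℕ) : ℝ) = (m : ℝ) - (k : ℝ) := by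
    push_cast [Nat.cast_sub hkmn.le]; ring
  refine ⟨hkmn, ?_, ?_, ?_⟩
  · rw [hcast, hkr]; nlinarith
  · rw [hcast, hkr]; nlinarith
  · rw [hcast, hkr, div_sub_one (by linarith), div_le_iff₀ hβ]
    nlinarith

/-- Claim 13: basic properties of `n'`, `n''`, `n'''`, `n*` for `n ≥ N₀ = 3⌈α+1⌉`. -/
theorem nprimes_properties (α : ℝ) (hα : 1 < α) (n : ℕ)
    (hn : 3 * ⌈α + 1⌉₊ ≤ n) :
    (n = nP α n + nPP α n + nPPP α n ∧ nStar α n = nP α n + nPP α n) ∧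
    (α * ((nPPP α n : ℝ) - 3) ≤ (nStar α n : ℝ) ∧
      (nStar α n : ℝ) < α * (nPPP α n : ℝ)) ∧
    (α * ((nPP α n : ℝ) - 3) ≤ (nP α n : ℝ) ∧
      (nP α n : ℝ) < α * (nPP α n : ℝ)) ∧
    3 ≤ nPPP α n ∧
    (1 ≤ nP α n ∧ 1 ≤ nPP α n) := by
  have hβ : (0 : ℝ) < α + 1 := by linarith
  have hceil : (α + 1 : ℝ) ≤ (⌈α + 1⌉₊ : ℕ) := Nat.le_ceil _
  have hnr : (3 : ℝ) * (α + 1) ≤ (n : ℝ) := by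
    calc (3 : ℝ) * (α + 1) ≤ 3 * (⌈α + 1⌉₊ : ℝ) := by linarith
    _ ≤ (n : ℝ) := by exact_mod_cast hn
  have hn3 : (3 : ℝ) ≤ (n : ℝ) := by linarith
  have H1 := floor_step α hα n (nPPP α n) hn3 rfl
  obtain ⟨h1km, h1lo, h1hi, h1big⟩ := H1
  have hstar : nStar α n = n - nPPP α n := rfl
  have hstarr : ((nStar α n : ℕ) : ℝ) = ((n - nPPP α n : ℕ) : ℝ) := by rw [hstar]
  -- n* ≥ 3
  have hstar3 : (3 : ℝ) ≤ (nStar α n : ℝ) := by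
    have h2 : (2 : ℝ) < (nStar α n : ℝ) := by
      rw [hstarr]
      have hd : 3 * α ≤ (n : ℝ) * α / (α + 1) := by
        rw [le_div_iff₀ hβ]; nlinarith
      linarith [h1big]
    have : 2 < nStar α n := by exact_mod_cast h2
    exact_mod_cast this
  have H2 := floor_step α hα (nStar α n) (nPP α n) hstar3 rfl
  obtain ⟨h2km, h2lo, h2hi, _⟩ := H2
  have hPr : ((nP α n : ℕ) : ℝ) = ((nStar α n - nPP α n : ℕ) : ℝ) := rfl
  -- n''' ≥ 3
  have hppp3 : 3 ≤ nPPP α n := by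
    have : (2 : ℝ) ≤ (n : ℝ) / (α + 1) := by
      rw [le_div_iff₀ hβ]; nlinarith
    have : 2 ≤ ⌊(n : ℝ) / (α + 1)⌋₊ := Nat.le_floor this
    unfold nPPP; omega
  refine ⟨⟨?_, ?_⟩, ⟨?_, ?_⟩, ⟨?_, ?_⟩, hppp3, ?_, ?_⟩
  · unfold nP nPP nStar at *; omega
  · unfold nP nPP nStar at *; omega
  · rw [hstarr]; exact h1lo
  · rw [hstarr]; exact h1hi
  · rw [hPr]; exact h2lo
  · rw [hPr]; exact h2hi
  · unfold nP; omega
  · unfold nPP; omega
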